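/- Let (X,d) be a complete metric space and T : X → X be a contractive mapping, and let E, F : (0,∞) → ℝ satisfy condition (C2). If F(d(Tx,Ty)) ≤ E(d(x,y)) for all x,y ∈ X with Tx ≠ Ty, then T is a CJMP-contraction, hence a Picard operator. -/

import Mathlib

open Filter Topology

/-- `T` is a Picard operator: it has a unique fixed point `u` and every
sequence of iterates converges to `u`. -/
def IsPicardOperator {X : Type*} [MetricSpace X] (T : X → X) : Prop :=
  ∃ u : X, T u = u ∧ (∀ v : X, T v = v → v = u) ∧
    ∀ x : X, Tendsto (fun n => T^[n] x) atTop (𝓝 u)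

/-- `T` is contractive: `d(Tx,Ty) < d(x,y)` whenever `x ≠ y`. -/
def Contractive {X : Type*} [MetricSpace X] (T : X → X) : Prop :=
  ∀ x y : X, x ≠ y → dist (T x) (T y) < dist x y

/-- The Matkowski–Węgrzyk condition. -/
def MWCondition {X : Type*} [MetricSpace X] (T : X → X) : Prop :=
  ∀ ε > (0 : ℝ), ∃ δ > (0 : ℝ), ∀ x y : X,
    ε < dist x y → dist x y < ε + δ → dist (T x) (T y) ≤ ε

/-- `T` is a CJMP-contraction. -/
def IsCJMP {X : Type*} [MetricSpace X] (T : X → X) : Prop :=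
  Contractive T ∧ MWCondition T

lemma dist_T_le {X : Type*} [MetricSpace X] {T : X → X} (hT : Contractive T) (x y : X) :
    dist (T x) (T y) ≤ dist x y := by
  rcases eq_or_ne x y with rfl | h
  · simp
  · exact (hT x y h).le

lemma picard_aux {X : Type*} [MetricSpace X] [CompleteSpace X] {T : X → X}
    (hT : Contractive T) (hMW : MWCondition T) (x : X) :
    ∃ u : X, Tendsto (fun n => T^[n] x) atTop (𝓝 u) ∧ T u = u := by
  set f : ℕ → X := fun n => T^[n] x with hf
  have hfs : ∀ n, f (n + 1) = T (f n) := fun n => Function.iterate_succ_apply' T n x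
  set d : ℕ → ℝ := fun n => dist (f n) (f (n + 1)) with hd
  have hdsucc : ∀ n, d (n + 1) ≤ d n := by
    intro n
    have h1 : d (n + 1) = dist (T (f n)) (T (f (n + 1))) := by
      simp only [hd, hfs]
    rw [h1]
    exact dist_T_le hT _ _
  have hanti : Antitone d := antitone_nat_of_succ_le hdsucc
  have hbdd : BddBelow (Set.range d) := ⟨0, by rintro y ⟨n, rfl⟩; exact dist_nonneg⟩
  set L : ℝ := ⨅ n, d n with hL
  have hLd : ∀ n, L ≤ d n := fun n => ciInf_le hbdd n
  have hLtendsto : Tendsto d atTop (𝓝 L) := tendsto_atTop_ciInf hanti hbdd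
  have hL0 : L = 0 := by
    by_contra hne
    have hLpos : 0 < L := lt_of_le_of_ne (le_ciInf fun n => dist_nonneg) (Ne.symm hne)
    have hstrict : ∀ n, L < d n := by
      intro n
      have hne' : f n ≠ f (n + 1) := by
        rw [← dist_pos]; exact lt_of_lt_of_le hLpos (hLd n)
      have : d (n + 1) < d n := by
        have h1 : d (n + 1) = dist (T (f n)) (T (f (n + 1))) := by
          simp only [hd, hfs]
        rw [h1]; exact hT _ _ hne'
      exact lt_of_le_of_lt (hLd (n + 1)) this
    obtain ⟨δ, hδ, hMWδ⟩ := hMW L hLpos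
    obtain ⟨n, hn⟩ := (hLtendsto.eventually (eventually_lt_nhds (by linarith : L < L + δ))).exists
    have : d (n + 1) ≤ L := by
      have h1 : d (n + 1) = dist (T (f n)) (T (f (n + 1))) := by
        simp only [hd, hfs]
      rw [h1]
      exact hMWδ _ _ (hstrict n) hn
    exact absurd this (not_le.mpr (hstrict (n + 1)))
  have hd0 : Tendsto d atTop (𝓝 0) := hL0 ▸ hLtendsto
  -- Cauchy
  have hcauchy : CauchySeq f := by
    rw [Metric.cauchySeq_iff]
    intro ε hε
    obtain ⟨δ, hδ, hMWδ⟩ := hMW (ε / 4) (by linarith)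
    set δ' : ℝ := min δ (ε / 4) with hδ'
    have hδ'pos : 0 < δ' := lt_min hδ (by linarith)
    obtain ⟨N, hN⟩ := (Metric.tendsto_atTop.mp hd0 δ' hδ'pos)
    have key : ∀ k, dist (f N) (f (N + k)) < ε / 4 + δ' := by
      intro k
      induction k with
      | zero =>
        simp only [Nat.add_zero, dist_self]
        positivity
      | succ k ih =>
        have h1 : dist (f N) (f (N + (k + 1))) ≤ d N + dist (f (N + 1)) (f (N + k + 1)) :=
          dist_triangle (f N) (f (N + 1)) (f (N + k + 1))
        have h2 : dist (f (N + 1)) (f (N + k + 1)) ≤ ε / 4 := by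
          have heq : dist (f (N + 1)) (f (N + k + 1)) = dist (T (f N)) (T (f (N + k))) := by
            simp only [hfs]
          rw [heq]
          rcases le_or_gt (dist (f N) (f (N + k))) (ε / 4) with hle | hlt
          · exact le_trans (dist_T_le hT _ _) hle
          · exact hMWδ _ _ hlt (lt_of_lt_of_le ih (by
              have : δ' ≤ δ := min_le_left _ _
              linarith))
        have h3 : d N < δ' := by
          have := hN N (le_refl N)
          rw [Real.dist_eq] at this
          have hd0' : 0 ≤ d N := dist_nonneg
          calc d N = |d N - 0| := by rw [sub_zero, abs_of_nonneg hd0']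
            _ < δ' := this
        calc dist (f N) (f (N + (k + 1))) ≤ d N + dist (f (N + 1)) (f (N + k + 1)) := h1
          _ < δ' + ε / 4 := by linarith
          _ = ε / 4 + δ' := by ring
    refine ⟨N, fun m hm n hn => ?_⟩
    have hδ'le : δ' ≤ ε / 4 := min_le_right _ _
    have hm' : dist (f N) (f m) < ε / 4 + δ' := by
      obtain ⟨k, rfl⟩ := Nat.exists_eq_add_of_le hm
      exact key k
    have hn' : dist (f N) (f n) < ε / 4 + δ' := by
      obtain ⟨k, rfl⟩ := Nat.exists_eq_add_of_le hn
      exact key k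
    calc dist (f m) (f n) ≤ dist (f m) (f N) + dist (f N) (f n) := dist_triangle _ _ _
      _ = dist (f N) (f m) + dist (f N) (f n) := by rw [dist_comm (f m)]
      _ < (ε / 4 + δ') + (ε / 4 + δ') := by linarith
      _ ≤ ε := by linarith
  obtain ⟨u, hu⟩ := cauchySeq_tendsto_of_complete hcauchy
  refine ⟨u, hu, ?_⟩
  have hTcont : Continuous T := by
    have : LipschitzWith 1 T := LipschitzWith.of_dist_le_mul (fun a b => by
      simpa using dist_T_le hT a b)
    exact this.continuous
  have h1 : Tendsto (fun n => T (f n)) atTop (𝓝 (T u)) := (hTcont.tendsto u).comp hu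
  have h2 : Tendsto (fun n => f (n + 1)) atTop (𝓝 u) := hu.comp (tendsto_add_atTop_nat 1)
  have h3 : (fun n => f (n + 1)) = fun n => T (f n) := funext hfs
  rw [h3] at h2
  exact tendsto_nhds_unique h1 h2

theorem stmt_7 {X : Type*} [MetricSpace X] [CompleteSpace X] [Nonempty X] (T : X → X)
    (hT : Contractive T) (E F : ℝ → ℝ)
    (hC2 : ∀ t > (0 : ℝ), ∀ tn : ℕ → ℝ, (∀ n, t < tn n) → Tendsto tn atTop (𝓝 t) →
      ∀ sn : ℕ → ℝ, (∀ n, t < sn n ∧ sn n < tn n) →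
        0 < limsup (fun n => F (sn n) - E (tn n)) atTop)
    (hcontr : ∀ x y : X, T x ≠ T y → F (dist (T x) (T y)) ≤ E (dist x y)) :
    IsCJMP T ∧ IsPicardOperator T := by
  have hMW : MWCondition T := by
    intro ε hε
    by_contra h
    push_neg at h
    have hseq : ∀ n : ℕ, ∃ p : X × X, ε < dist p.1 p.2 ∧ dist p.1 p.2 < ε + 1 / (n + 1) ∧
        ε < dist (T p.1) (T p.2) := by
      intro n
      obtain ⟨x, y, h1, h2, h3⟩ := h (1 / (n + 1)) (by positivity)
      exact ⟨(x, y), h1, h2, h3⟩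
    choose p h1 h2 h3 using hseq
    set tn : ℕ → ℝ := fun n => dist (p n).1 (p n).2 with htn
    set sn : ℕ → ℝ := fun n => dist (T (p n).1) (T (p n).2) with hsn
    have htnto : Tendsto tn atTop (𝓝 ε) := by
      have hup : Tendsto (fun n : ℕ => ε + 1 / (n + 1 : ℝ)) atTop (𝓝 ε) := by
        have : Tendsto (fun n : ℕ => 1 / ((n : ℝ) + 1)) atTop (𝓝 0) := tendsto_one_div_add_atTop_nhds_zero_nat
        have h' := (tendsto_const_nhds (x := ε) (f := atTop (α := ℕ))).add this
        simpa using h'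
      exact tendsto_of_tendsto_of_tendsto_of_le_of_le tendsto_const_nhds hup
        (fun n => (h1 n).le) (fun n => (h2 n).le)
    have hsnlt : ∀ n, ε < sn n ∧ sn n < tn n := by
      intro n
      refine ⟨h3 n, ?_⟩
      have hne : (p n).1 ≠ (p n).2 := by
        rw [← dist_pos]; exact lt_trans hε (h1 n)
      exact hT _ _ hne
    have hpos := hC2 ε hε tn h1 htnto sn hsnlt
    have hle : ∀ n, F (sn n) - E (tn n) ≤ 0 := by
      intro n
      have hne : T (p n).1 ≠ T (p n).2 := by
        rw [← dist_pos]; exact lt_trans hε (h3 n)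
      have := hcontr _ _ hne
      simp only [hsn, htn]
      linarith
    have hlimsup : limsup (fun n => F (sn n) - E (tn n)) atTop ≤ 0 := by
      rw [Filter.limsup_eq]
      have h0mem : (0 : ℝ) ∈ {a | ∀ᶠ n in atTop, F (sn n) - E (tn n) ≤ a} :=
        Eventually.of_forall hle
      by_cases hbb : BddBelow {a | ∀ᶠ n in atTop, F (sn n) - E (tn n) ≤ a}
      · exact csInf_le hbb h0mem
      · rw [Real.sInf_of_not_bddBelow hbb]
    exact absurd hpos (not_lt.mpr hlimsup)
  refine ⟨⟨hT, hMW⟩, ?_⟩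
  obtain ⟨x0⟩ := (inferInstance : Nonempty X)
  obtain ⟨u, hu, hfix⟩ := picard_aux hT hMW x0
  have huniq : ∀ v : X, T v = v → v = u := by
    intro v hv
    by_contra hne
    have := hT v u hne
    rw [hv, hfix] at this
    exact absurd this (lt_irrefl _)
  refine ⟨u, hfix, huniq, fun x => ?_⟩
  obtain ⟨w, hw, hwfix⟩ := picard_aux hT hMW x
  rwa [huniq w hwfix] at hw
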